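/- Let R be a ring, G an additive subgroup of R of finite index with Stab_R(G) of finite index in (R,+). Then G contains a left ideal of R of finite index, namely J(G) = {x ∈ G : r·x ∈ G for all r ∈ R}. -/

import Mathlib

/-- The left stabilizer of an additive subgroup `G` of a ring, as an additive subgroup. -/
def leftStab {R : Type*} [Ring R] (G : AddSubgroup R) : AddSubgroup R where
  carrier := {r : R | ∀ x ∈ G, r * x ∈ G}
  zero_mem' := by intro x hx; simpa using G.zero_mem
  add_mem' := by
    intro a b ha hb x hx
    have := G.add_mem (ha x hx) (hb x hx)
    simpa [add_mul] using this
  neg_mem' := by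
    intro a ha x hx
    have := G.neg_mem (ha x hx)
    simpa [neg_mul] using this

/-- If `G` is an additive subgroup of finite index in `(R,+)` whose stabilizer
`Stab_R(G)` also has finite index, then `G` contains a left ideal of `R` of finite
index, namely `J(G) = {x ∈ G | ∀ r, r·x ∈ G}`. -/
theorem JG_finite_index_left_ideal {R : Type*} [Ring R] (G : AddSubgroup R)
    (hG : G.index ≠ 0) (hstab : (leftStab G).index ≠ 0) :
    ∃ J : Ideal R,
      (J : Set R) = {x : R | x ∈ G ∧ ∀ r : R, r * x ∈ G} ∧
      (J : Set R) ⊆ (G : Set R) ∧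
      J.toAddSubgroup.index ≠ 0 := by
  set S := leftStab G with hS
  let J : Ideal R := {
            carrier := {x : R | x ∈ G ∧ ∀ r : R, r * x ∈ G}
            zero_mem' := ⟨G.zero_mem, fun r => by simpa using G.zero_mem⟩
            add_mem' := fun {a b} ha hb => ⟨G.add_mem ha.1 hb.1,
              fun r => by simpa [mul_add] using G.add_mem (ha.2 r) (hb.2 r)⟩
            smul_mem' := fun c x hx => ⟨by simpa using hx.2 c,
              fun r => by simpa [smul_eq_mul, ← mul_assoc] using hx.2 (r * c)⟩ }
  refine ⟨J, rfl, fun x hx => hx.1, ?_⟩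
  -- finite index
  haveI : Finite (R ⧸ S) := by
    rw [AddSubgroup.index] at hstab
    exact (Nat.card_ne_zero.mp hstab).2
  set J' : AddSubgroup R :=
    G ⊓ ⨅ q : R ⧸ S, G.comap (AddMonoidHom.mulLeft (Quotient.out q)) with hJ'
  have hidx : J'.index ≠ 0 := by
    refine AddSubgroup.index_inf_ne_zero hG ?_
    refine AddSubgroup.index_iInf_ne_zero fun q => ?_
    have h := AddSubgroup.index_comap G (AddMonoidHom.mulLeft (Quotient.out q))
    rw [h]
    intro h0
    exact hG (zero_dvd_iff.mp (h0 ▸ AddSubgroup.relIndex_dvd_index_of_normal G _))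
  have heq : J' = {x : R | x ∈ G ∧ ∀ r : R, r * x ∈ G} := by
    ext x
    simp only [hJ', AddSubgroup.mem_inf, Set.mem_setOf_eq]
    constructor
    · rintro ⟨hxG, h⟩
      refine ⟨hxG, fun r => ?_⟩
      have hq : Quotient.out (QuotientAddGroup.mk (s := S) r) * x ∈ G :=
        AddSubgroup.mem_iInf.mp h (QuotientAddGroup.mk r)
      have hs : r - Quotient.out (QuotientAddGroup.mk (s := S) r) ∈ S := by
        have : (QuotientAddGroup.mk (s := S) (Quotient.out (QuotientAddGroup.mk (s := S) r)))
            = QuotientAddGroup.mk r := Quotient.out_eq' _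
        rwa [QuotientAddGroup.eq, neg_add_eq_sub] at this
      have := G.add_mem (hs x hxG) hq
      simpa [sub_mul] using this
    · rintro ⟨hxG, h⟩
      exact ⟨hxG, AddSubgroup.mem_iInf.mpr fun q => h _⟩
  have hfin : J.toAddSubgroup = J' := SetLike.ext' heq.symm
  rw [hfin]; exact hidx
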